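/- Let n and ℓ be integers with n ≥ 3ℓ and n > ℓ ≥ 0. Then for every down-set F ⊆ 2^[n] with ‖F‖_n < (n + 1)/2, one has |F| ≥ Σ_{0 ≤ i < ℓ} C(n,i) + (‖F‖_n − ℓ)·C(n,ℓ). -/

import Mathlib

open Finset

/-- The binomial norm of a family `F` of subsets of `[n]`:
`‖F‖ₙ = ∑_{A ∈ F} 1 / C(n, |A|)`. -/
noncomputable def binNorm (n : ℕ) (F : Finset (Finset ℕ)) : ℝ :=
  ∑ A ∈ F, 1 / (n.choose A.card : ℝ)

namespace Stmt15Aux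


lemma choose_le_half {n k i : ℕ} (h1 : k ≤ i) (h2 : 2 * i ≤ n) :
    n.choose k ≤ n.choose i := by
  induction i with
  | zero => rw [Nat.le_zero.mp h1]
  | succ m ih =>
    rcases Nat.eq_or_lt_of_le h1 with h | h
    · rw [h]
    · have hk : k ≤ m := by omega
      exact (ih hk (by omega)).trans (Nat.choose_le_succ_of_lt_half_left (by omega))

lemma choose_le_mid {n k i : ℕ} (h1 : k ≤ i) (h2 : i ≤ n - k) :
    n.choose k ≤ n.choose i := by
  have hkn : k ≤ n := le_trans h1 (le_trans h2 (Nat.sub_le n k))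
  have hin : i ≤ n := le_trans h2 (Nat.sub_le n k)
  by_cases h : 2 * i ≤ n
  · exact choose_le_half h1 h
  · rw [← Nat.choose_symm hin]
    exact choose_le_half (by omega) (by omega)

lemma kl1_coef (a d : ℕ) :
    (2*a+d+5) * ((a+4)*(a+5)) ≤
      2*((a+4)*(a+5)) + 2*((2*a+d+6)*(a+5)) + (a+d)*((2*a+d+5)*(2*a+d+6)) := by
  have h5 : 5*a ≤ 5*(a*a) := Nat.mul_le_mul_left 5 (Nat.le_mul_self a)
  nlinarith [h5, Nat.zero_le (a*a*d), Nat.zero_le (a*d*d), Nat.zero_le (a*a*a),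
    Nat.zero_le (a*d), Nat.zero_le (d*d), Nat.zero_le (d*d*d)]

lemma kl1_choose (n ℓ : ℕ) (hl : 3 ≤ ℓ) (h3 : 3 * ℓ ≤ n) :
    (n - 1 - ℓ) * n.choose ℓ ≤
      2 * n.choose ℓ + 2 * n.choose (ℓ+1) + (n - ℓ - 1 - (ℓ+2)) * n.choose (ℓ+2) := by
  obtain ⟨a, rfl⟩ : ∃ a, ℓ = a + 3 := ⟨ℓ - 3, by omega⟩
  obtain ⟨d, rfl⟩ : ∃ d, n = 3 * (a + 3) + d := ⟨n - 3 * (a + 3), by omega⟩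
  set n := 3 * (a + 3) + d with hn
  have e0 : n - 1 - (a+3) = 2*a+d+5 := by omega
  have e1 : n - (a+3) = 2*a+d+6 := by omega
  have e2 : n - (a+3+1) = 2*a+d+5 := by omega
  have e3 : n - (a+3) - 1 - (a+3+2) = a+d := by omega
  have id1 : n.choose (a+3+1) * (a+4) = n.choose (a+3) * (2*a+d+6) := by
    have := Nat.choose_succ_right_eq n (a+3)
    rw [e1] at this
    simpa using this
  have id2 : n.choose (a+3+2) * (a+5) = n.choose (a+3+1) * (2*a+d+5) := by
    have := Nat.choose_succ_right_eq n (a+3+1)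
    rw [e2] at this
    have h45 : a+3+1+1 = a+3+2 := by omega
    rw [h45] at this
    simpa using this
  rw [e0, e3]
  set C0 := n.choose (a+3)
  set C1 := n.choose (a+3+1)
  set C2 := n.choose (a+3+2)
  apply Nat.le_of_mul_le_mul_right _ (show 0 < (a+4)*(a+5) by positivity)
  have h1' : C1 * ((a+4)*(a+5)) = C0 * ((2*a+d+6)*(a+5)) := by
    calc C1 * ((a+4)*(a+5)) = (C1*(a+4))*(a+5) := by ring
      _ = (C0*(2*a+d+6))*(a+5) := by rw [id1]
      _ = C0 * ((2*a+d+6)*(a+5)) := by ring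
  have h2' : C2 * ((a+4)*(a+5)) = C0 * ((2*a+d+5)*(2*a+d+6)) := by
    calc C2 * ((a+4)*(a+5)) = (C2 * (a+5)) * (a+4) := by ring
      _ = (C1 * (2*a+d+5)) * (a+4) := by rw [id2]
      _ = (C1 * (a+4)) * (2*a+d+5) := by ring
      _ = (C0 * (2*a+d+6)) * (2*a+d+5) := by rw [id1]
      _ = C0 * ((2*a+d+5)*(2*a+d+6)) := by ring
  calc (2*a+d+5) * C0 * ((a+4)*(a+5))
      = C0 * ((2*a+d+5) * ((a+4)*(a+5))) := by ring
    _ ≤ C0 * (2*((a+4)*(a+5)) + 2*((2*a+d+6)*(a+5)) + (a+d)*((2*a+d+5)*(2*a+d+6))) :=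
        Nat.mul_le_mul_left C0 (kl1_coef a d)
    _ = (2 * C0 + 2 * C1 + (a+d) * C2) * ((a+4)*(a+5)) := by
        have expand : (2 * C0 + 2 * C1 + (a+d) * C2) * ((a+4)*(a+5))
            = 2*(C0 * ((a+4)*(a+5))) + 2*(C1 * ((a+4)*(a+5))) + (a+d)*(C2 * ((a+4)*(a+5))) := by
          ring
        rw [expand, h1', h2']
        ring

lemma KL1 (n ℓ : ℕ) (hl : 1 ≤ ℓ) (h3 : 3 * ℓ ≤ n) :
    (n - 1 - ℓ) * n.choose ℓ ≤ ∑ i ∈ Ico ℓ (n-1), n.choose i := by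
  by_cases hcase : ℓ ≤ 2
  · calc (n - 1 - ℓ) * n.choose ℓ = ∑ _i ∈ Ico ℓ (n-1), n.choose ℓ := by
          rw [sum_const, Nat.card_Ico, smul_eq_mul]
      _ ≤ _ := sum_le_sum fun i hi => by
          obtain ⟨hi1, hi2⟩ := mem_Ico.1 hi
          exact choose_le_mid hi1 (by omega)
  · have hl3 : 3 ≤ ℓ := by omega
    have hsubset : insert ℓ (insert (ℓ+1) (insert (n-ℓ-1) (insert (n-ℓ)
        (Ico (ℓ+2) (n-ℓ-1))))) ⊆ Ico ℓ (n-1) := by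
      intro i hi
      simp only [mem_insert, mem_Ico] at hi ⊢
      omega
    have hsum : ∑ i ∈ insert ℓ (insert (ℓ+1) (insert (n-ℓ-1) (insert (n-ℓ)
        (Ico (ℓ+2) (n-ℓ-1))))), n.choose i
        = n.choose ℓ + (n.choose (ℓ+1) + (n.choose (n-ℓ-1) + (n.choose (n-ℓ) +
          ∑ i ∈ Ico (ℓ+2) (n-ℓ-1), n.choose i))) := by
      rw [sum_insert, sum_insert, sum_insert, sum_insert] <;>
        simp only [mem_insert, mem_Ico] <;> omega
    have hsym1 : n.choose (n-ℓ-1) = n.choose (ℓ+1) := by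
      rw [Nat.sub_sub, Nat.choose_symm (by omega)]
    have hsym2 : n.choose (n-ℓ) = n.choose ℓ := Nat.choose_symm (by omega)
    have hmid : (n - ℓ - 1 - (ℓ+2)) * n.choose (ℓ+2) ≤ ∑ i ∈ Ico (ℓ+2) (n-ℓ-1), n.choose i := by
      calc (n - ℓ - 1 - (ℓ+2)) * n.choose (ℓ+2)
          = ∑ _i ∈ Ico (ℓ+2) (n-ℓ-1), n.choose (ℓ+2) := by
            rw [sum_const, Nat.card_Ico, smul_eq_mul]
        _ ≤ _ := sum_le_sum fun i hi => by
            obtain ⟨hi1, hi2⟩ := mem_Ico.1 hi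
            exact choose_le_mid hi1 (by omega)
    rw [hsym1, hsym2] at hsum
    have htot : n.choose ℓ + (n.choose (ℓ+1) + (n.choose (ℓ+1) + (n.choose ℓ +
        ∑ i ∈ Ico (ℓ+2) (n-ℓ-1), n.choose i))) ≤ ∑ i ∈ Ico ℓ (n-1), n.choose i :=
      le_trans (le_of_eq hsum.symm) (sum_le_sum_of_subset hsubset)
    have := kl1_choose n ℓ hl3 h3
    omega



def lev (F : Finset (Finset ℕ)) (i : ℕ) : ℕ := (F.filter fun A => A.card = i).card

lemma card_le_n {n : ℕ} {F : Finset (Finset ℕ)} (hsub : ∀ A ∈ F, A ⊆ Finset.range n)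
    {A : Finset ℕ} (hA : A ∈ F) : A.card ≤ n := by
  have := card_le_card (hsub A hA)
  rwa [card_range] at this

lemma card_eq {n : ℕ} {F : Finset (Finset ℕ)} (hsub : ∀ A ∈ F, A ⊆ Finset.range n) :
    F.card = ∑ i ∈ range (n+1), lev F i :=
  card_eq_sum_card_fiberwise fun A hA => mem_range.2 (Nat.lt_succ_of_le (card_le_n hsub hA))

lemma norm_eq {n : ℕ} {F : Finset (Finset ℕ)} (hsub : ∀ A ∈ F, A ⊆ Finset.range n) :
    binNorm n F = ∑ i ∈ range (n+1), (lev F i : ℝ) / (n.choose i : ℝ) := by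
  rw [binNorm, ← sum_fiberwise_of_maps_to
    (fun A hA => mem_range.2 (Nat.lt_succ_of_le (card_le_n hsub hA)))
    (fun A => 1 / ((n.choose A.card : ℕ) : ℝ))]
  refine sum_congr rfl fun i _ => ?_
  rw [sum_congr rfl (g := fun _ => 1 / ((n.choose i : ℕ) : ℝ))
    (fun A hA => by rw [(mem_filter.1 hA).2]), sum_const, nsmul_eq_mul, lev, mul_one_div]

lemma lev_le (n : ℕ) (F : Finset (Finset ℕ)) (hsub : ∀ A ∈ F, A ⊆ Finset.range n) (i : ℕ) :
    lev F i ≤ n.choose i := by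
  have hss : F.filter (fun A => A.card = i) ⊆ (range n).powersetCard i := by
    intro A hA
    obtain ⟨hAF, hAc⟩ := mem_filter.1 hA
    exact mem_powersetCard.2 ⟨hsub A hAF, hAc⟩
  calc lev F i ≤ ((range n).powersetCard i).card := card_le_card hss
    _ = n.choose i := by rw [card_powersetCard, card_range]

lemma step {n : ℕ} {F : Finset (Finset ℕ)} (hsub : ∀ A ∈ F, A ⊆ Finset.range n)
    (hdown : ∀ A ∈ F, ∀ B ⊆ A, B ∈ F) (i : ℕ) :
    (i+1) * lev F (i+1) ≤ (n - i) * lev F i := by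
  classical
  have key1 : ∀ A ∈ F.filter (fun A => A.card = i+1),
      ((F.filter fun B => B.card = i).filter fun B => B ⊆ A).card = i + 1 := by
    intro A hA
    obtain ⟨hAF, hAc⟩ := mem_filter.1 hA
    have hEq : (F.filter fun B => B.card = i).filter (fun B => B ⊆ A) = A.powersetCard i := by
      ext B
      simp only [mem_filter, mem_powersetCard]
      constructor
      · rintro ⟨⟨-, hBc⟩, hBA⟩; exact ⟨hBA, hBc⟩
      · rintro ⟨hBA, hBc⟩; exact ⟨⟨hdown A hAF B hBA, hBc⟩, hBA⟩
    rw [hEq, card_powersetCard, hAc, Nat.choose_succ_self_right]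
  have key2 : ∀ B ∈ F.filter (fun B => B.card = i),
      ((F.filter fun A => A.card = i+1).filter fun A => B ⊆ A).card ≤ n - i := by
    intro B hB
    obtain ⟨hBF, hBc⟩ := mem_filter.1 hB
    have hBr : B ⊆ range n := hsub B hBF
    have hsubim : ((F.filter fun A => A.card = i+1).filter fun A => B ⊆ A)
        ⊆ (range n \ B).image (fun x => insert x B) := by
      intro A hA
      obtain ⟨hA', hBA⟩ := mem_filter.1 hA
      obtain ⟨hAF, hAc⟩ := mem_filter.1 hA'
      have hnss : ¬ A ⊆ B := by
        intro h
        have := card_le_card h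
        omega
      obtain ⟨x, hx⟩ := sdiff_nonempty.2 hnss
      have hxA := (mem_sdiff.1 hx).1
      have hxB := (mem_sdiff.1 hx).2
      refine mem_image.2 ⟨x, mem_sdiff.2 ⟨hsub A hAF hxA, hxB⟩, ?_⟩
      apply Finset.eq_of_subset_of_card_le (insert_subset hxA hBA)
      rw [card_insert_of_notMem hxB]
      omega
    calc ((F.filter fun A => A.card = i+1).filter fun A => B ⊆ A).card
        ≤ ((range n \ B).image (fun x => insert x B)).card := card_le_card hsubim
      _ ≤ (range n \ B).card := card_image_le
      _ = n - i := by rw [card_sdiff_of_subset hBr, card_range, hBc]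
  calc (i+1) * lev F (i+1)
      = ∑ _A ∈ F.filter (fun A => A.card = i+1), (i+1) := by
        rw [sum_const, lev, smul_eq_mul, mul_comm]
    _ = ∑ A ∈ F.filter (fun A => A.card = i+1),
          ((F.filter fun B => B.card = i).filter fun B => B ⊆ A).card :=
        sum_congr rfl fun A hA => (key1 A hA).symm
    _ = ∑ A ∈ F.filter (fun A => A.card = i+1), ∑ B ∈ F.filter (fun B => B.card = i),
          if B ⊆ A then 1 else 0 := by
        refine sum_congr rfl fun A _ => ?_
        rw [card_filter]
    _ = ∑ B ∈ F.filter (fun B => B.card = i), ∑ A ∈ F.filter (fun A => A.card = i+1),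
          if B ⊆ A then 1 else 0 := sum_comm
    _ = ∑ B ∈ F.filter (fun B => B.card = i),
          ((F.filter fun A => A.card = i+1).filter fun A => B ⊆ A).card := by
        refine sum_congr rfl fun B _ => ?_
        rw [card_filter]
    _ ≤ ∑ _B ∈ F.filter (fun B => B.card = i), (n - i) := sum_le_sum key2
    _ = (n - i) * lev F i := by rw [sum_const, lev, smul_eq_mul, mul_comm]

lemma x_anti {n : ℕ} {F : Finset (Finset ℕ)} (hsub : ∀ A ∈ F, A ⊆ Finset.range n)
    (hdown : ∀ A ∈ F, ∀ B ⊆ A, B ∈ F) {i j : ℕ} (hij : i ≤ j) (hj : j ≤ n) :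
    (lev F j : ℝ) / (n.choose j : ℝ) ≤ (lev F i : ℝ) / (n.choose i : ℝ) := by
  induction j with
  | zero => rw [Nat.le_zero.mp hij]
  | succ m ih =>
    rcases Nat.eq_or_lt_of_le hij with h | h
    · rw [h]
    · have hm : i ≤ m := by omega
      refine le_trans ?_ (ih hm (by omega))
      have hCpos : (0:ℝ) < n.choose m := by
        exact_mod_cast Nat.choose_pos (show m ≤ n by omega)
      have hC'pos : (0:ℝ) < n.choose (m+1) := by
        exact_mod_cast Nat.choose_pos (show m+1 ≤ n from hj)
      rw [div_le_div_iff₀ hC'pos hCpos]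
      have h1n := step hsub hdown m
      have h1 : ((m:ℝ)+1) * (lev F (m+1) : ℝ) ≤ ((n:ℝ) - m) * (lev F m : ℝ) := by
        have hc : (((m+1) * lev F (m+1) : ℕ) : ℝ) ≤ (((n - m) * lev F m : ℕ) : ℝ) :=
          Nat.cast_le.2 h1n
        rw [Nat.cast_mul, Nat.cast_mul, Nat.cast_sub (show m ≤ n by omega)] at hc
        push_cast at hc ⊢
        linarith
      have h2 : (n.choose (m+1) : ℝ) * ((m:ℝ)+1) = (n.choose m : ℝ) * ((n:ℝ) - m) := by
        have := Nat.choose_succ_right_eq n m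
        have hc := congrArg (fun k : ℕ => (k : ℝ)) this
        simp only [Nat.cast_mul] at hc
        rw [Nat.cast_sub (show m ≤ n by omega)] at hc
        push_cast at hc ⊢
        linarith
      have hm1 : (0:ℝ) < (m:ℝ) + 1 := by positivity
      have hmain : ((m:ℝ)+1) * ((lev F (m+1) : ℝ) * (n.choose m : ℝ))
          ≤ ((m:ℝ)+1) * ((lev F m : ℝ) * (n.choose (m+1) : ℝ)) := by
        calc ((m:ℝ)+1) * ((lev F (m+1) : ℝ) * (n.choose m : ℝ))
            = (((m:ℝ)+1) * (lev F (m+1) : ℝ)) * (n.choose m : ℝ) := by ring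
          _ ≤ (((n:ℝ) - m) * (lev F m : ℝ)) * (n.choose m : ℝ) :=
              mul_le_mul_of_nonneg_right h1 hCpos.le
          _ = ((m:ℝ)+1) * ((lev F m : ℝ) * (n.choose (m+1) : ℝ)) := by
              linear_combination (-(lev F m : ℝ)) * h2
      exact le_of_mul_le_mul_left hmain hm1



lemma powerset_norm {n : ℕ} (hn : 1 ≤ n) (A' : Finset ℕ) (hA' : A'.card = n - 1) :
    binNorm n A'.powerset = ((n:ℝ) + 1) / 2 := by
  classical
  have hmaps : ∀ B ∈ A'.powerset, B.card ∈ range n := by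
    intro B hB
    have := card_le_card (mem_powerset.1 hB)
    rw [hA'] at this
    exact mem_range.2 (by omega)
  rw [binNorm, ← sum_fiberwise_of_maps_to hmaps (fun A => 1 / ((n.choose A.card : ℕ) : ℝ))]
  have hfib : ∀ i ∈ range n,
      (∑ B ∈ A'.powerset.filter (fun B => B.card = i), 1 / ((n.choose B.card : ℕ) : ℝ))
        = ((n:ℝ) - i) / n := by
    intro i hi
    have hi' : i < n := mem_range.1 hi
    have hpc : A'.powerset.filter (fun B => B.card = i) = A'.powersetCard i := by
      ext B
      simp only [mem_filter, mem_powerset, mem_powersetCard]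
    rw [hpc, sum_congr rfl (g := fun _ => 1 / ((n.choose i : ℕ) : ℝ))
      (fun B hB => by rw [(mem_powersetCard.1 hB).2]), sum_const, card_powersetCard, hA',
      nsmul_eq_mul, mul_one_div]
    have hid : n * (n-1).choose i = n.choose i * (n - i) := by
      obtain ⟨m, rfl⟩ : ∃ m, n = m + 1 := ⟨n - 1, by omega⟩
      rw [Nat.add_sub_cancel]
      rw [Nat.add_one_mul_choose_eq m i, Nat.choose_succ_right_eq]
    have hCpos : (0:ℝ) < n.choose i := by exact_mod_cast Nat.choose_pos (by omega)
    have hnpos : (0:ℝ) < n := by exact_mod_cast hn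
    rw [div_eq_div_iff hCpos.ne' hnpos.ne']
    have hc := congrArg (fun k : ℕ => (k : ℝ)) hid
    simp only [Nat.cast_mul] at hc
    rw [Nat.cast_sub (le_of_lt hi')] at hc
    push_cast at hc ⊢
    linarith
  rw [sum_congr rfl hfib]
  have hrefl : ∑ i ∈ range n, ((n:ℝ) - i) = ∑ i ∈ range n, ((i:ℝ) + 1) := by
    rw [← Finset.sum_range_reflect (fun j => (j:ℝ) + 1) n]
    refine sum_congr rfl fun j hj => ?_
    have hj' := mem_range.1 hj
    have hcast : ((n - 1 - j : ℕ) : ℝ) = (n:ℝ) - 1 - j := by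
      rw [Nat.cast_sub (by omega), Nat.cast_sub hn]
      push_cast
      ring
    rw [hcast]
    ring
  have h2S : (∑ i ∈ range n, ((n:ℝ) - i)) * 2 = n * ((n:ℝ) + 1) := by
    calc (∑ i ∈ range n, ((n:ℝ) - i)) * 2
        = (∑ i ∈ range n, ((n:ℝ) - i)) + (∑ i ∈ range n, ((i:ℝ) + 1)) := by
          rw [← hrefl]; ring
      _ = ∑ i ∈ range n, (((n:ℝ) - i) + ((i:ℝ) + 1)) := sum_add_distrib.symm
      _ = ∑ _i ∈ range n, ((n:ℝ) + 1) := sum_congr rfl fun i _ => by ring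
      _ = n * ((n:ℝ) + 1) := by rw [sum_const, card_range, nsmul_eq_mul]
  rw [← sum_div]
  have hn0 : (n:ℝ) ≠ 0 := by
    have : (0:ℝ) < n := by exact_mod_cast hn
    linarith
  have hS : (∑ i ∈ range n, ((n:ℝ) - i)) = (n:ℝ) * ((n:ℝ) + 1) / 2 := by linarith
  rw [hS]
  field_simp

lemma small_card {n : ℕ} {F : Finset (Finset ℕ)} (hsub : ∀ A ∈ F, A ⊆ Finset.range n)
    (hdown : ∀ A ∈ F, ∀ B ⊆ A, B ∈ F) (hnorm : binNorm n F < ((n : ℝ) + 1) / 2)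
    (hn : 1 ≤ n) : ∀ A ∈ F, A.card + 2 ≤ n := by
  intro A hA
  by_contra hcon
  have hAn : A.card ≤ n := by
    have := card_le_card (hsub A hA)
    rwa [card_range] at this
  obtain ⟨A', hA'sub, hA'card⟩ := Finset.exists_subset_card_eq (s := A) (n := n-1) (by omega)
  have hA'F : A' ∈ F := hdown A hA A' hA'sub
  have hpow : A'.powerset ⊆ F := fun B hB => hdown A' hA'F B (mem_powerset.1 hB)
  have hmono : binNorm n A'.powerset ≤ binNorm n F := by
    apply sum_le_sum_of_subset_of_nonneg hpow
    intro B _ _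
    positivity
  rw [powerset_norm hn A' hA'card] at hmono
  linarith


end Stmt15Aux

open Stmt15Aux in
theorem stmt_15 (n ℓ : ℕ) (h3ℓ : 3 * ℓ ≤ n) (hℓn : ℓ < n)
    (F : Finset (Finset ℕ))
    (hsub : ∀ A ∈ F, A ⊆ Finset.range n)
    (hdown : ∀ A ∈ F, ∀ B ⊆ A, B ∈ F)
    (hnorm : binNorm n F < ((n : ℝ) + 1) / 2) :
    (F.card : ℝ) ≥ (∑ i ∈ Finset.range ℓ, (n.choose i : ℝ)) +
      (binNorm n F - (ℓ : ℝ)) * (n.choose ℓ : ℝ) := by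
  classical
  rcases Nat.eq_zero_or_pos ℓ with hl0 | hlpos
  · subst hl0
    have hle : binNorm n F ≤ (F.card : ℝ) := by
      rw [binNorm]
      calc ∑ A ∈ F, 1 / ((n.choose A.card : ℕ) : ℝ) ≤ ∑ _A ∈ F, (1:ℝ) := by
            refine sum_le_sum fun A hA => ?_
            have h1 : 1 ≤ n.choose A.card := by
              apply Nat.choose_pos
              have := card_le_card (hsub A hA)
              rwa [card_range] at this
            have h1' : (1:ℝ) ≤ (n.choose A.card : ℝ) := by exact_mod_cast h1
            rw [div_le_one (by linarith)]
            exact h1'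
        _ = (F.card : ℝ) := by rw [sum_const, nsmul_eq_mul, mul_one]
    simp only [range_zero, sum_empty, Nat.choose_zero_right, Nat.cast_one, Nat.cast_zero,
      sub_zero, mul_one, zero_add, ge_iff_le]
    exact hle
  -- main case ℓ ≥ 1
  have hn3 : 3 ≤ n := by omega
  set x : ℕ → ℝ := fun i => (lev F i : ℝ) / (n.choose i : ℝ) with hx
  set C : ℝ := (n.choose ℓ : ℝ) with hC
  have hCpos : 0 < C := by
    rw [hC]; exact_mod_cast Nat.choose_pos (by omega)
  have hsmall := small_card hsub hdown hnorm (by omega)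
  have hlev0 : ∀ i, n - 2 < i → lev F i = 0 := by
    intro i hi
    rw [lev, card_eq_zero, filter_eq_empty_iff]
    intro A hA
    have := hsmall A hA
    omega
  -- P2 : middle-top part
  have hxstar_nonneg : 0 ≤ x (n - ℓ) := by
    rw [hx]
    positivity
  have KL1real : 0 ≤ ∑ i ∈ Ico ℓ (n-1), ((n.choose i : ℝ) - C) := by
    rw [sum_sub_distrib, sum_const, Nat.card_Ico, nsmul_eq_mul, sub_nonneg, hC]
    exact_mod_cast KL1 n ℓ hlpos h3ℓ
  have P2 : 0 ≤ ∑ i ∈ Ico ℓ (n+1), (x i * (n.choose i : ℝ) - x i * C) := by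
    have hzero : ∀ i ∈ Ico ℓ (n+1), i ∉ Ico ℓ (n-1) →
        x i * (n.choose i : ℝ) - x i * C = 0 := by
      intro i hi hni
      simp only [mem_Ico] at hi hni
      have : lev F i = 0 := hlev0 i (by omega)
      rw [hx]
      simp [this]
    rw [← sum_subset (Ico_subset_Ico_right (by omega : n - 1 ≤ n + 1)) hzero]
    have per : ∀ i ∈ Ico ℓ (n-1), x (n-ℓ) * ((n.choose i : ℝ) - C)
        ≤ x i * (n.choose i : ℝ) - x i * C := by
      intro i hi
      obtain ⟨hi1, hi2⟩ := mem_Ico.1 hi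
      have hexp : x i * (n.choose i : ℝ) - x i * C = x i * ((n.choose i : ℝ) - C) := by ring
      rw [hexp]
      by_cases hmid : i ≤ n - ℓ
      · have hCi : C ≤ (n.choose i : ℝ) := by
          rw [hC]
          exact_mod_cast choose_le_mid hi1 hmid
        have hxx : x (n-ℓ) ≤ x i := x_anti hsub hdown hmid (by omega)
        exact mul_le_mul_of_nonneg_right hxx (by linarith)
      · have hni : n - ℓ < i := by omega
        have hCi : (n.choose i : ℝ) ≤ C := by
          rw [hC]
          have hsymm : n.choose i = n.choose (n - i) := (Nat.choose_symm (by omega)).symm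
          rw [hsymm]
          have h2' : ℓ ≤ n - (n - i) := by omega
          exact_mod_cast choose_le_mid (show n - i ≤ ℓ by omega) h2'
        have hxx : x i ≤ x (n-ℓ) := x_anti hsub hdown (by omega) (by omega)
        exact mul_le_mul_of_nonpos_right hxx (by linarith)
    calc (0:ℝ) ≤ x (n-ℓ) * ∑ i ∈ Ico ℓ (n-1), ((n.choose i : ℝ) - C) :=
          mul_nonneg hxstar_nonneg KL1real
      _ = ∑ i ∈ Ico ℓ (n-1), x (n-ℓ) * ((n.choose i : ℝ) - C) := mul_sum _ _ _
      _ ≤ ∑ i ∈ Ico ℓ (n-1), (x i * (n.choose i : ℝ) - x i * C) := sum_le_sum per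
  -- P1 : bottom part
  have P1 : ∑ i ∈ range ℓ, ((n.choose i : ℝ) - C)
      ≤ ∑ i ∈ range ℓ, (x i * (n.choose i : ℝ) - x i * C) := by
    refine sum_le_sum fun i hi => ?_
    have hi' := mem_range.1 hi
    have hCi : (n.choose i : ℝ) ≤ C := by
      rw [hC]
      exact_mod_cast choose_le_mid (show i ≤ ℓ by omega) (show ℓ ≤ n - i by omega)
    have hx1 : x i ≤ 1 := by
      rw [hx]
      have hpos : (0:ℝ) < (n.choose i : ℝ) := by
        exact_mod_cast Nat.choose_pos (show i ≤ n by omega)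
      rw [div_le_one hpos]
      exact_mod_cast lev_le n F hsub i
    have hmul := mul_le_mul_of_nonpos_right hx1 (show (n.choose i : ℝ) - C ≤ 0 by linarith)
    -- hmul : 1 * (Ci - C) ≤ x i * (Ci - C)
    nlinarith [hmul]
  -- key inequality
  have key : ∑ i ∈ range ℓ, ((n.choose i : ℝ) - C)
      ≤ ∑ i ∈ range (n+1), (x i * (n.choose i : ℝ) - x i * C) := by
    rw [← sum_range_add_sum_Ico _ (show ℓ ≤ n+1 by omega)]
    linarith [P1, P2]
  -- final algebra
  have E1 : (F.card : ℝ) = ∑ i ∈ range (n+1), x i * (n.choose i : ℝ) := by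
    rw [card_eq hsub, Nat.cast_sum]
    refine sum_congr rfl fun i hi => ?_
    have hin : i ≤ n := by have := mem_range.1 hi; omega
    have hpos : ((n.choose i : ℕ) : ℝ) ≠ 0 := by
      exact_mod_cast (Nat.choose_pos hin).ne'
    rw [hx]
    field_simp
  have E2 : binNorm n F = ∑ i ∈ range (n+1), x i := norm_eq hsub
  have E3 : (ℓ : ℝ) * C = ∑ _i ∈ range ℓ, C := by
    rw [sum_const, card_range, nsmul_eq_mul]
  have E4 : (∑ i ∈ range (n+1), x i) * C = ∑ i ∈ range (n+1), x i * C := sum_mul _ _ _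
  have E5 : ∑ i ∈ range (n+1), (x i * (n.choose i:ℝ) - x i * C)
      = (∑ i ∈ range (n+1), x i * (n.choose i:ℝ)) - ∑ i ∈ range (n+1), x i * C :=
    sum_sub_distrib _ _
  have E6 : ∑ i ∈ range ℓ, ((n.choose i:ℝ) - C)
      = (∑ i ∈ range ℓ, (n.choose i:ℝ)) - ∑ _i ∈ range ℓ, C := sum_sub_distrib _ _
  rw [ge_iff_le, E2, E1]
  have E7 : ((∑ i ∈ range (n+1), x i) - (ℓ:ℝ)) * C
      = (∑ i ∈ range (n+1), x i * C) - (ℓ:ℝ) * C := by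
    rw [sub_mul, E4]
  rw [E7]
  linarith [key, E3, E5, E6]
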